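/- Let a < b and let W, F : [a,b]² → ℝ be continuous with W ≥ 0, and suppose W attains a strict maximum over the square D = [a,b]² at a point z₀ in the interior of D. Suppose X : D → ℝ² is a continuous vector field with X₁ > 0 and X₂ > 0 on the interior of D, and W is C¹ with X·∇W + W − F = 0 on D, where F ≤ W on D. Then a contradiction follows; i.e., no such configuration exists. -/

import Mathlib

open Set

set_option maxHeartbeats 2000000 in
/-- No strict interior maximum: if `W ≥ 0` is `C¹` on the square `D = [a,b]²`, attains a
strict maximum over `D` at an interior point, and satisfies `X·∇W + W − F = 0` on `D`,
where `X` is continuous with both components positive in the interior and `F ≤ W` on `D`,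
then a contradiction follows. -/
theorem stmt_11
    (a b : ℝ) (hab : a < b)
    (W F : ℝ × ℝ → ℝ) (X : ℝ × ℝ → ℝ × ℝ)
    (hW_C1 : ContDiff ℝ 1 W)
    (hF_cont : ContinuousOn F (Icc a b ×ˢ Icc a b))
    (hX_cont : ContinuousOn X (Icc a b ×ˢ Icc a b))
    (hW_nonneg : ∀ z ∈ Icc a b ×ˢ Icc a b, 0 ≤ W z)
    -- strict maximum at an interior point z₀
    (z₀ : ℝ × ℝ) (hz₀ : z₀ ∈ Ioo a b ×ˢ Ioo a b)
    (hmax : ∀ z ∈ Icc a b ×ˢ Icc a b, z ≠ z₀ → W z < W z₀)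
    -- both components of X positive in the interior
    (hX1 : ∀ z ∈ Ioo a b ×ˢ Ioo a b, 0 < (X z).1)
    (hX2 : ∀ z ∈ Ioo a b ×ˢ Ioo a b, 0 < (X z).2)
    -- the equation `X·∇W + W − F = 0` on D
    (heq : ∀ z ∈ Icc a b ×ˢ Icc a b, fderiv ℝ W z (X z) + W z - F z = 0)
    -- `F ≤ W` on D
    (hFW : ∀ z ∈ Icc a b ×ˢ Icc a b, F z ≤ W z) :
    False := by
  have ha1 : a < z₀.1 := hz₀.1.1
  have hb1 : z₀.1 < b := hz₀.1.2
  have ha2 : a < z₀.2 := hz₀.2.1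
  have hb2 : z₀.2 < b := hz₀.2.2
  set D := Icc a b ×ˢ Icc a b with hDdef
  set U := Ioo a b ×ˢ Ioo a b with hUdef
  set ρ : ℝ := min (z₀.1 - a) (z₀.2 - a) / 2 with hρdef
  have hρ : 0 < ρ := by
    have := lt_min (sub_pos.mpr ha1) (sub_pos.mpr ha2)
    positivity
  have hρ1 : ρ < z₀.1 - a := by
    have h1 : min (z₀.1 - a) (z₀.2 - a) ≤ z₀.1 - a := min_le_left _ _
    have h2 : (0:ℝ) < min (z₀.1 - a) (z₀.2 - a) :=
      lt_min (sub_pos.mpr ha1) (sub_pos.mpr ha2)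
    rw [hρdef]; linarith
  have hρ2 : ρ < z₀.2 - a := by
    have h1 : min (z₀.1 - a) (z₀.2 - a) ≤ z₀.2 - a := min_le_right _ _
    have h2 : (0:ℝ) < min (z₀.1 - a) (z₀.2 - a) :=
      lt_min (sub_pos.mpr ha1) (sub_pos.mpr ha2)
    rw [hρdef]; linarith
  set Q : Set (ℝ × ℝ) := Icc (z₀.1 - ρ) z₀.1 ×ˢ Icc (z₀.2 - ρ) z₀.2 with hQdef
  have hQU : Q ⊆ U := by
    rintro z ⟨hz1, hz2⟩
    exact ⟨⟨by linarith [hz1.1], lt_of_le_of_lt hz1.2 hb1⟩,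
      ⟨by linarith [hz2.1], lt_of_le_of_lt hz2.2 hb2⟩⟩
  have hUD : U ⊆ D := prod_mono Ioo_subset_Icc_self Ioo_subset_Icc_self
  have hQD : Q ⊆ D := hQU.trans hUD
  have hQc : IsCompact Q := isCompact_Icc.prod isCompact_Icc
  have hz₀Q : z₀ ∈ Q := ⟨⟨by linarith, le_rfl⟩, ⟨by linarith, le_rfl⟩⟩
  have hXcQ : ContinuousOn X Q := hX_cont.mono hQD
  -- lower bound m for components of X on Q
  have hmincont : ContinuousOn (fun z => min (X z).1 (X z).2) Q :=
    (hXcQ.fst).inf (hXcQ.snd)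
  obtain ⟨zm, hzmQ, hzm⟩ := hQc.exists_isMinOn ⟨z₀, hz₀Q⟩ hmincont
  set m : ℝ := min (X zm).1 (X zm).2 with hmdef
  have hm : 0 < m := lt_min (hX1 zm (hQU hzmQ)) (hX2 zm (hQU hzmQ))
  have hmX1 : ∀ z ∈ Q, m ≤ (X z).1 := fun z hz =>
    le_trans (hzm hz) (min_le_left _ _)
  have hmX2 : ∀ z ∈ Q, m ≤ (X z).2 := fun z hz =>
    le_trans (hzm hz) (min_le_right _ _)
  -- upper bound L for ‖X‖ on Q
  obtain ⟨L, hL⟩ := hQc.exists_bound_of_continuousOn hXcQ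
  have hcomp1 : ∀ z ∈ Q, (X z).1 ≤ L := fun z hz =>
    le_trans (le_trans (le_abs_self _)
      (by rw [← Real.norm_eq_abs]; exact norm_fst_le (X z))) (hL z hz)
  have hcomp2 : ∀ z ∈ Q, (X z).2 ≤ L := fun z hz =>
    le_trans (le_trans (le_abs_self _)
      (by rw [← Real.norm_eq_abs]; exact norm_snd_le (X z))) (hL z hz)
  have hmL : m ≤ L := le_trans (hmX1 z₀ hz₀Q) (hcomp1 z₀ hz₀Q)
  have hLpos : 0 < L := lt_of_lt_of_le hm hmL
  -- bound G for ‖fderiv W‖ on Q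
  have hfd : Continuous (fderiv ℝ W) := hW_C1.continuous_fderiv one_ne_zero
  obtain ⟨G0, hG0⟩ := hQc.exists_bound_of_continuousOn hfd.continuousOn
  set G : ℝ := max G0 1 with hGdef
  have hGpos : (0:ℝ) < G := lt_of_lt_of_le one_pos (le_max_right _ _)
  have hG : ∀ z ∈ Q, ‖fderiv ℝ W z‖ ≤ G := fun z hz =>
    le_trans (hG0 z hz) (le_max_left _ _)
  -- the gap
  set δ : ℝ := ρ * m / L with hδdef
  have hδpos : 0 < δ := by positivity
  have hδρ : δ ≤ ρ := by
    rw [hδdef, div_le_iff₀ hLpos]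
    nlinarith
  set K : Set (ℝ × ℝ) := Q ∩ {z | z.1 ≤ z₀.1 - δ} with hKdef
  have hKc : IsCompact K := hQc.inter_right (isClosed_le continuous_fst continuous_const)
  have hKne : K.Nonempty := by
    refine ⟨(z₀.1 - δ, z₀.2), ⟨⟨⟨?_, ?_⟩, ?_, ?_⟩, ?_⟩⟩ <;> simp <;> linarith
  obtain ⟨zs, hzsK, hzs⟩ := hKc.exists_isMaxOn hKne hW_C1.continuous.continuousOn
  have hzsne : zs ≠ z₀ := by
    intro hzz
    have : zs.1 ≤ z₀.1 - δ := hzsK.2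
    rw [hzz] at this; linarith
  set g : ℝ := W z₀ - W zs with hgdef
  have hg : 0 < g := sub_pos.mpr (hmax zs (hQD hzsK.1) hzsne)
  -- per-step error tolerance
  set ε : ℝ := g * L / (2 * ρ * G) with hεdef
  have hε : 0 < ε := by positivity
  -- uniform continuity of X on Q
  obtain ⟨η, hη, hmod⟩ :=
    Metric.uniformContinuousOn_iff.mp (hQc.uniformContinuousOn_of_continuous hXcQ) ε hε
  -- number of steps
  obtain ⟨N, hN⟩ := exists_nat_gt (ρ / η)
  have hNpos : 0 < (N:ℝ) := lt_of_le_of_lt (by positivity) hN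
  set h : ℝ := ρ / (L * N) with hhdef
  have hh : 0 < h := by positivity
  have hhL : h * L = ρ / N := by
    rw [hhdef]; field_simp
  have hhLη : h * L < η := by
    rw [hhL, div_lt_iff₀ hNpos]
    calc ρ = (ρ / η) * η := by field_simp
    _ < N * η := by
      apply mul_lt_mul_of_pos_right hN hη
    _ = η * N := by ring
  have hNhL : (N:ℝ) * (h * L) = ρ := by
    rw [hhL]; field_simp
  have hNhm : (N:ℝ) * (h * m) = δ := by
    rw [hδdef, hhdef]; field_simp
  -- the Euler polygon
  set p : ℕ → ℝ × ℝ := fun k => Nat.rec z₀ (fun _ q => q - h • X q) k with hpdef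
  have hp0 : p 0 = z₀ := rfl
  have hps : ∀ k, p (k+1) = p k - h • X (p k) := fun k => rfl
  -- the key one-step estimate
  have key : ∀ q : ℝ × ℝ, q ∈ Q → (∀ s ∈ Icc (0:ℝ) h, q - s • X q ∈ Q) →
      W q - h * (G * ε) ≤ W (q - h • X q) := by
    intro q hq hseg
    set v := X q with hvdef
    have hvL : ‖v‖ ≤ L := hL q hq
    set ψ : ℝ → ℝ := fun s => W (q - s • v) + s * (G * ε) with hψdef
    have hγ : ∀ s : ℝ, HasDerivAt (fun t : ℝ => q - t • v) (-v) s := by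
      intro s
      simpa using ((hasDerivAt_id s).smul_const v).const_sub q
    have hψd : ∀ s : ℝ, HasDerivAt ψ ((fderiv ℝ W (q - s • v)) (-v) + G * ε) s := by
      intro s
      have h1 : HasDerivAt (fun t : ℝ => W (q - t • v)) ((fderiv ℝ W (q - s • v)) (-v)) s :=
        (hW_C1.differentiable one_ne_zero _).hasFDerivAt.comp_hasDerivAt s (hγ s)
      exact (h1.add ((hasDerivAt_id s).mul_const (G * ε))).congr_deriv (by simp)
    have hmono : MonotoneOn ψ (Icc 0 h) := by
      apply monotoneOn_of_deriv_nonneg (convex_Icc 0 h)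
      · exact ((hW_C1.continuous.comp
          (continuous_const.sub (continuous_id.smul continuous_const))).add
          (continuous_id.mul continuous_const)).continuousOn
      · exact fun s _ => (hψd s).differentiableAt.differentiableWithinAt
      · intro s hs
        rw [interior_Icc] at hs
        rw [(hψd s).deriv]
        set y := q - s • v with hydef
        have hyQ : y ∈ Q := hseg s ⟨hs.1.le, hs.2.le⟩
        have hyD : y ∈ D := hQD hyQ
        have h0 : (fderiv ℝ W y) (X y) ≤ 0 := by
          have e1 := heq y hyD
          have e2 := hFW y hyD
          linarith
        have hdist : dist q y < η := by
          rw [dist_eq_norm]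
          have hqy : q - y = s • v := by rw [hydef]; abel
          rw [hqy]
          calc ‖s • v‖ = |s| * ‖v‖ := by rw [norm_smul, Real.norm_eq_abs]
          _ ≤ h * L := by
            apply mul_le_mul _ hvL (norm_nonneg v) hh.le
            rw [abs_of_nonneg hs.1.le]; exact hs.2.le
          _ < η := hhLη
        have hXd : ‖v - X y‖ ≤ ε := by
          have := hmod q hq y hyQ hdist
          rw [dist_eq_norm] at this
          exact this.le
        have h2 : (fderiv ℝ W y) (v - X y) ≤ G * ε := by
          calc (fderiv ℝ W y) (v - X y) ≤ |(fderiv ℝ W y) (v - X y)| := le_abs_self _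
          _ = ‖(fderiv ℝ W y) (v - X y)‖ := (Real.norm_eq_abs _).symm
          _ ≤ ‖fderiv ℝ W y‖ * ‖v - X y‖ := (fderiv ℝ W y).le_opNorm _
          _ ≤ G * ε := mul_le_mul (hG y hyQ) hXd (norm_nonneg _) hGpos.le
        have h3 : (fderiv ℝ W y) v ≤ G * ε := by
          have hsplit : (fderiv ℝ W y) v
              = (fderiv ℝ W y) (X y) + (fderiv ℝ W y) (v - X y) := by
            rw [← map_add]
            congr 1
            abel
          linarith
        rw [map_neg]
        linarith
    have hle := hmono (left_mem_Icc.mpr hh.le) (right_mem_Icc.mpr hh.le) hh.le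
    have hψ0 : ψ 0 = W q := by simp [hψdef]
    have hψh : ψ h = W (q - h • v) + h * (G * ε) := rfl
    rw [hψ0, hψh] at hle
    linarith
  -- coordinates of points
  have hfst : ∀ (z w : ℝ × ℝ) (s : ℝ), (z - s • w).1 = z.1 - s * w.1 := by
    intro z w s; simp
  have hsnd : ∀ (z w : ℝ × ℝ) (s : ℝ), (z - s • w).2 = z.2 - s * w.2 := by
    intro z w s; simp
  -- membership from coordinate bounds
  have hmemQ : ∀ z : ℝ × ℝ, z₀.1 - ρ ≤ z.1 → z.1 ≤ z₀.1 → z₀.2 - ρ ≤ z.2 → z.2 ≤ z₀.2 →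
      z ∈ Q := fun z h1 h2 h3 h4 => ⟨⟨h1, h2⟩, ⟨h3, h4⟩⟩
  have hbound : ∀ k : ℝ, 0 ≤ k → k ≤ N → k * (h * L) ≤ ρ := by
    intro k hk0 hkN
    rw [← hNhL]
    exact mul_le_mul_of_nonneg_right hkN (by positivity)
  -- main induction
  have main : ∀ k : ℕ, k ≤ N →
      (z₀.1 - k * (h * L) ≤ (p k).1 ∧ (p k).1 ≤ z₀.1 - k * (h * m)) ∧
      (z₀.2 - k * (h * L) ≤ (p k).2 ∧ (p k).2 ≤ z₀.2 - k * (h * m)) ∧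
      W z₀ - k * (h * (G * ε)) ≤ W (p k) := by
    intro k
    induction k with
    | zero => intro _; simp [hp0]
    | succ k ih =>
      intro hk1
      have hkN : k ≤ N := Nat.le_of_succ_le hk1
      have hkNr : (k:ℝ) ≤ N := Nat.cast_le.mpr hkN
      have hk1Nr : ((k:ℝ) + 1) ≤ N := by
        have := (Nat.cast_le (α := ℝ)).mpr hk1
        push_cast at this
        linarith
      obtain ⟨⟨h1l, h1u⟩, ⟨h2l, h2u⟩, hWk⟩ := ih hkN
      have hk0 : (0:ℝ) ≤ (k:ℝ) := by positivity
      have hkhm : 0 ≤ (k:ℝ) * (h * m) := by positivity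
      have hkhL := hbound k hk0 hkNr
      have hk1hL := hbound ((k:ℝ) + 1) (by positivity) hk1Nr
      have hpkQ : p k ∈ Q :=
        hmemQ (p k) (by linarith) (by linarith) (by linarith) (by linarith)
      set v := X (p k) with hvdef
      have hv1m : m ≤ v.1 := hmX1 _ hpkQ
      have hv2m : m ≤ v.2 := hmX2 _ hpkQ
      have hv1L : v.1 ≤ L := hcomp1 _ hpkQ
      have hv2L : v.2 ≤ L := hcomp2 _ hpkQ
      have hseg : ∀ s ∈ Icc (0:ℝ) h, p k - s • v ∈ Q := by
        intro s hs
        apply hmemQ (p k - s • v)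
        · rw [hfst]
          have : s * v.1 ≤ h * L := mul_le_mul hs.2 hv1L (le_trans hm.le hv1m) hh.le
          nlinarith
        · rw [hfst]
          have : 0 ≤ s * v.1 := mul_nonneg hs.1 (le_trans hm.le hv1m)
          linarith
        · rw [hsnd]
          have : s * v.2 ≤ h * L := mul_le_mul hs.2 hv2L (le_trans hm.le hv2m) hh.le
          nlinarith
        · rw [hsnd]
          have : 0 ≤ s * v.2 := mul_nonneg hs.1 (le_trans hm.le hv2m)
          linarith
      have hstep := key (p k) hpkQ hseg
      refine ⟨?_, ?_, ?_⟩
      · rw [hps k, ← hvdef, hfst]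
        push_cast
        constructor
        · have : h * v.1 ≤ h * L := mul_le_mul_of_nonneg_left hv1L hh.le
          linarith
        · have : h * m ≤ h * v.1 := mul_le_mul_of_nonneg_left hv1m hh.le
          linarith
      · rw [hps k, ← hvdef, hsnd]
        push_cast
        constructor
        · have : h * v.2 ≤ h * L := mul_le_mul_of_nonneg_left hv2L hh.le
          linarith
        · have : h * m ≤ h * v.2 := mul_le_mul_of_nonneg_left hv2m hh.le
          linarith
      · rw [hps k, ← hvdef]
        push_cast
        linarith
  -- conclusion
  obtain ⟨⟨h1l, h1u⟩, ⟨h2l, h2u⟩, hWN⟩ := main N le_rfl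
  have hNhL' := hbound N (by positivity) le_rfl
  have hNhm' : 0 ≤ (N:ℝ) * (h * m) := by positivity
  have hpNQ : p N ∈ Q :=
    hmemQ (p N) (by linarith) (by linarith) (by linarith) (by linarith)
  have hpNK : p N ∈ K := ⟨hpNQ, by
    show (p N).1 ≤ z₀.1 - δ
    rw [← hNhm]
    exact h1u⟩
  have hle1 : W (p N) ≤ W zs := hzs hpNK
  have hNhGε : (N:ℝ) * (h * (G * ε)) = g / 2 := by
    have hρne : ρ ≠ 0 := ne_of_gt hρ
    have hLne : L ≠ 0 := ne_of_gt hLpos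
    have hGne : G ≠ 0 := ne_of_gt hGpos
    have hNne : (N:ℝ) ≠ 0 := ne_of_gt hNpos
    rw [hhdef, hεdef]
    field_simp
  rw [hNhGε] at hWN
  linarith [hgdef.le, hgdef.ge]
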